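/- In the IRL1 setting with level-set boundedness, there exist an integer k̄ and a vector s ∈ {−1, 0, +1}^n such that sign(x_i^k) = s_i for all i ∈ {1, …, n} and all k > k̄; i.e., the sign pattern of the iterates is eventually constant. -/

import Mathlib

open Filter Topology

/-- The weight function `w(t, s) = p(|t| + s)^(p-1)`. -/
noncomputable def wfun (p t s : ℝ) : ℝ := p * (|t| + s) ^ (p - 1)

/-- The IRL1 setting (Algorithm 2.1 of the paper): fixed data `p ∈ (0,1)`, `λ > 0`,
`μ ∈ (0,1)`, a differentiable `f` with `Lf`-Lipschitz gradient (`Lf ≥ 0`), iterates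
`x^k`, positive parameters `ε^k` with `ε^{k+1} ≤ μ ε^k` componentwise, and for each `k`
a differentiable model `Q_k` with `∇Q_k(x^k) = ∇f(x^k)`, `M`-strongly convex with
`M > Lf/2` (strong convexity meaning `z ↦ Q_k z - (M/2)‖z‖²` is convex), `∇Q_k`
`L`-Lipschitz, such that `x^{k+1}` is a global minimizer of
`G(·; x^k, ε^k) = Q_k(·) + λ Σᵢ w(xᵢ^k, εᵢ^k)|·ᵢ|`. -/
structure IRL1 (n : ℕ) where
  p : ℝ
  lam : ℝ
  mu : ℝ
  Lf : ℝ
  M : ℝ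
  L : ℝ
  f : EuclideanSpace ℝ (Fin n) → ℝ
  x : ℕ → EuclideanSpace ℝ (Fin n)
  eps : ℕ → Fin n → ℝ
  Q : ℕ → EuclideanSpace ℝ (Fin n) → ℝ
  hp0 : 0 < p
  hp1 : p < 1
  hlam : 0 < lam
  hmu0 : 0 < mu
  hmu1 : mu < 1
  hLf : 0 ≤ Lf
  hM : Lf / 2 < M
  hf_diff : Differentiable ℝ f
  hf_lip : ∀ a b, ‖gradient f a - gradient f b‖ ≤ Lf * ‖a - b‖
  heps_pos : ∀ k i, 0 < eps k i
  heps_dec : ∀ k i, eps (k + 1) i ≤ mu * eps k i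
  hQ_diff : ∀ k, Differentiable ℝ (Q k)
  hQ_grad : ∀ k, gradient (Q k) (x k) = gradient f (x k)
  hQ_sconv : ∀ k, ConvexOn ℝ Set.univ (fun z => Q k z - M / 2 * ‖z‖ ^ 2)
  hQ_lip : ∀ k a b, ‖gradient (Q k) a - gradient (Q k) b‖ ≤ L * ‖a - b‖
  hmin : ∀ k, ∀ z : EuclideanSpace ℝ (Fin n),
    Q k (x (k + 1)) + lam * ∑ i, wfun p (x k i) (eps k i) * |x (k + 1) i|
      ≤ Q k z + lam * ∑ i, wfun p (x k i) (eps k i) * |z i|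

/-- The smoothed objective `F(x, ε) = f(x) + λ Σᵢ (|xᵢ| + εᵢ)^p`. -/
noncomputable def IRL1.Feps {n : ℕ} (S : IRL1 n)
    (z : EuclideanSpace ℝ (Fin n)) (e : Fin n → ℝ) : ℝ :=
  S.f z + S.lam * ∑ i, (|z i| + e i) ^ S.p

/-- The objective `F(x) = f(x) + λ Σᵢ |xᵢ|^p`. -/
noncomputable def IRL1.Fobj {n : ℕ} (S : IRL1 n) (z : EuclideanSpace ℝ (Fin n)) : ℝ :=
  S.f z + S.lam * ∑ i, |z i| ^ S.p

/-- The subproblem objective `G(z; x^k, ε^k)`. -/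
noncomputable def IRL1.G {n : ℕ} (S : IRL1 n) (k : ℕ)
    (z : EuclideanSpace ℝ (Fin n)) : ℝ :=
  S.Q k z + S.lam * ∑ i, wfun S.p (S.x k i) (S.eps k i) * |z i|

/-- The level set `{x : F(x) ≤ F(x⁰, ε⁰)}` is bounded. -/
def IRL1.LevelBounded {n : ℕ} (S : IRL1 n) : Prop :=
  Bornology.IsBounded {z : EuclideanSpace ℝ (Fin n) | S.Fobj z ≤ S.Feps (S.x 0) (S.eps 0)}


section AuxGeneral
open Filter Topology Set
local notation "⟪" x ", " y "⟫" => @inner ℝ _ _ x y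
variable {n : ℕ}




lemma aux_line_hasDerivAt {g : EuclideanSpace ℝ (Fin n) → ℝ} (hg : Differentiable ℝ g)
    (c d : EuclideanSpace ℝ (Fin n)) (t : ℝ) :
    HasDerivAt (fun s : ℝ => g (c + s • d)) ⟪gradient g (c + t • d), d⟫ t := by
  have h1 : HasDerivAt (fun s : ℝ => c + s • d) d t := by
    simpa using ((hasDerivAt_id t).smul_const d).const_add c
  have h2 := ((hg (c + t • d)).hasGradientAt).hasFDerivAt
  have h3 := h2.comp_hasDerivAt t h1
  simpa [Function.comp_def, InnerProductSpace.toDual_apply_apply] using h3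

lemma aux_descent {Lf : ℝ} {f : EuclideanSpace ℝ (Fin n) → ℝ} (hf : Differentiable ℝ f)
    (hlip : ∀ a b, ‖gradient f a - gradient f b‖ ≤ Lf * ‖a - b‖)
    (x y : EuclideanSpace ℝ (Fin n)) :
    f y ≤ f x + ⟪gradient f x, y - x⟫ + Lf / 2 * ‖y - x‖ ^ 2 := by
  set d := y - x with hd
  set c : ℝ := ⟪gradient f x, d⟫ with hc
  set g : ℝ → ℝ := fun t => f (x + t • d) - (t * c + Lf / 2 * ‖d‖ ^ 2 * t ^ 2) with hg
  have hder : ∀ t : ℝ, HasDerivAt g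
      (⟪gradient f (x + t • d), d⟫ - (c + Lf / 2 * ‖d‖ ^ 2 * (2 * t))) t := by
    intro t
    have h1 := aux_line_hasDerivAt hf x d t
    have h2 : HasDerivAt (fun t : ℝ => t * c + Lf / 2 * ‖d‖ ^ 2 * t ^ 2)
        (c + Lf / 2 * ‖d‖ ^ 2 * (2 * t)) t := by
      have h3 := ((hasDerivAt_id t).mul_const c).add
        ((hasDerivAt_pow 2 t).const_mul (Lf / 2 * ‖d‖ ^ 2))
      simpa [Pi.add_def, mul_comm, mul_assoc, mul_left_comm] using h3
    exact h1.sub h2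
  have hcont : Continuous g := by
    apply Continuous.sub
    · exact hf.continuous.comp (by continuity)
    · continuity
  have mono : AntitoneOn g (Set.Icc 0 1) := by
    apply antitoneOn_of_deriv_nonpos (convex_Icc 0 1) hcont.continuousOn
    · intro t _
      exact (hder t).differentiableAt.differentiableWithinAt
    · intro t ht
      rw [interior_Icc] at ht
      rw [(hder t).deriv]
      have hb : ⟪gradient f (x + t • d) - gradient f x, d⟫ ≤ Lf * t * ‖d‖ ^ 2 := by
        calc ⟪gradient f (x + t • d) - gradient f x, d⟫
            ≤ ‖gradient f (x + t • d) - gradient f x‖ * ‖d‖ := real_inner_le_norm _ _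
          _ ≤ (Lf * ‖(x + t • d) - x‖) * ‖d‖ := by
              apply mul_le_mul_of_nonneg_right (hlip _ _) (norm_nonneg d)
          _ = Lf * t * ‖d‖ ^ 2 := by
              rw [add_sub_cancel_left, norm_smul, Real.norm_eq_abs, abs_of_pos ht.1]
              ring
      have hsplit : ⟪gradient f (x + t • d), d⟫
          = c + ⟪gradient f (x + t • d) - gradient f x, d⟫ := by
        rw [inner_sub_left, hc]; ring
      rw [hsplit]
      nlinarith [hb]
  have h01 := mono (Set.mem_Icc.mpr ⟨le_refl 0, zero_le_one⟩)
    (Set.mem_Icc.mpr ⟨zero_le_one, le_refl 1⟩) zero_le_one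
  simp only [hg, one_smul, zero_smul, add_zero, one_pow] at h01
  have hxy : x + d = y := by rw [hd]; abel
  rw [hxy] at h01
  nlinarith [h01]




lemma aux_line_hasDerivAt' {g : EuclideanSpace ℝ (Fin n) → ℝ} (hg : Differentiable ℝ g)
    (c d : EuclideanSpace ℝ (Fin n)) (t : ℝ) :
    HasDerivAt (fun s : ℝ => g (c + s • d)) ⟪gradient g (c + t • d), d⟫ t := by
  have h1 : HasDerivAt (fun s : ℝ => c + s • d) d t := by
    simpa using ((hasDerivAt_id t).smul_const d).const_add c
  have h2 := ((hg (c + t • d)).hasGradientAt).hasFDerivAt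
  have h3 := h2.comp_hasDerivAt t h1
  simpa [Function.comp_def, InnerProductSpace.toDual_apply_apply] using h3

lemma aux_sconv_grad {Mc : ℝ} {Q : EuclideanSpace ℝ (Fin n) → ℝ} (hQ : Differentiable ℝ Q)
    (hconv : ConvexOn ℝ Set.univ (fun z => Q z - Mc / 2 * ‖z‖ ^ 2))
    (x y : EuclideanSpace ℝ (Fin n)) :
    ⟪gradient Q x, y - x⟫ + Mc / 2 * ‖y - x‖ ^ 2 ≤ Q y - Q x := by
  set d := y - x with hd
  have hxy : x + d = y := by rw [hd]; abel
  set φ : ℝ → ℝ := fun t =>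
    Q (x + t • d) - Mc / 2 * (‖x‖ ^ 2 + (2 * ⟪x, d⟫) * t + ‖d‖ ^ 2 * t ^ 2) with hφ
  have hrw : ∀ t : ℝ, ‖x + t • d‖ ^ 2
      = ‖x‖ ^ 2 + (2 * ⟪x, d⟫) * t + ‖d‖ ^ 2 * t ^ 2 := by
    intro t
    rw [norm_add_sq_real, real_inner_smul_right, norm_smul, Real.norm_eq_abs, mul_pow, sq_abs]
    ring
  have hφconv : ConvexOn ℝ Set.univ φ := by
    have hcomp := hconv.comp_affineMap (AffineMap.lineMap x y)
    have heq : (fun z => Q z - Mc / 2 * ‖z‖ ^ 2) ∘ (AffineMap.lineMap x y) = φ := by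
      funext t
      simp only [Function.comp_apply, AffineMap.lineMap_apply_module', hφ]
      rw [← hd, add_comm (t • d) x, hrw]
    rw [heq] at hcomp
    simpa using hcomp
  have hder : HasDerivAt φ (⟪gradient Q x, d⟫ - Mc / 2 * (2 * ⟪x, d⟫)) 0 := by
    have h1 := aux_line_hasDerivAt' hQ x d 0
    simp only [zero_smul, add_zero] at h1
    have h2 : HasDerivAt (fun t : ℝ =>
        Mc / 2 * (‖x‖ ^ 2 + (2 * ⟪x, d⟫) * t + ‖d‖ ^ 2 * t ^ 2)) (Mc / 2 * (2 * ⟪x, d⟫)) 0 := by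
      have h3 : HasDerivAt (fun t : ℝ => ‖x‖ ^ 2 + (2 * ⟪x, d⟫) * t + ‖d‖ ^ 2 * t ^ 2)
          (2 * ⟪x, d⟫) 0 := by
        have h4 := ((hasDerivAt_const (0:ℝ) (‖x‖ ^ 2)).add
          ((hasDerivAt_id (0:ℝ)).const_mul (2 * ⟪x, d⟫))).add
          ((hasDerivAt_pow 2 (0:ℝ)).const_mul (‖d‖ ^ 2))
        simpa [Pi.add_def] using h4
      simpa using h3.const_mul (Mc / 2)
    exact h1.sub h2
  have hslope := hφconv.le_slope_of_hasDerivAt (Set.mem_univ (0:ℝ)) (Set.mem_univ (1:ℝ))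
    one_pos hder
  have hsl : slope φ 0 1 = φ 1 - φ 0 := by
    rw [slope_def_field]; simp
  rw [hsl] at hslope
  have hφ1 : φ 1 = Q y - Mc / 2 * (‖x‖ ^ 2 + 2 * ⟪x, d⟫ + ‖d‖ ^ 2) := by
    simp only [hφ, one_smul, hxy]; ring_nf
  have hφ0 : φ 0 = Q x - Mc / 2 * ‖x‖ ^ 2 := by
    simp [hφ]
  rw [hφ1, hφ0] at hslope
  nlinarith [hslope]

lemma aux_strong_min {m : ℝ} {g : EuclideanSpace ℝ (Fin n) → ℝ} (hm : 0 ≤ m)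
    (hconv : ConvexOn ℝ Set.univ (fun z => g z - m / 2 * ‖z‖ ^ 2))
    {xs : EuclideanSpace ℝ (Fin n)} (hmin : ∀ z, g xs ≤ g z) (z : EuclideanSpace ℝ (Fin n)) :
    g xs + m / 2 * ‖z - xs‖ ^ 2 ≤ g z := by
  have hsc : StrongConvexOn Set.univ m g := strongConvexOn_iff_convex.mpr hconv
  by_contra hlt
  push_neg at hlt
  set Δ := ‖z - xs‖ ^ 2 with hΔ
  have hΔ0 : 0 ≤ Δ := by positivity
  set ε := g xs + m / 2 * Δ - g z with hε
  have hε0 : 0 < ε := by rw [hε]; linarith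
  have hD1 : (0:ℝ) < m / 2 * Δ + 1 := by positivity
  set t := min (1/2 : ℝ) (ε / (m / 2 * Δ + 1)) with ht
  have ht0 : 0 < t := lt_min (by norm_num) (div_pos hε0 hD1)
  have ht2 : t ≤ 1/2 := min_le_left _ _
  have key := hsc.2 (Set.mem_univ z) (Set.mem_univ xs) (le_of_lt ht0)
    (by linarith : (0:ℝ) ≤ 1 - t) (by ring)
  have hge := hmin (t • z + (1 - t) • xs)
  have htΔ : t * (m / 2 * Δ) < ε := by
    have h1 : t ≤ ε / (m / 2 * Δ + 1) := min_le_right _ _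
    have h2 : t * (m / 2 * Δ) ≤ (ε / (m / 2 * Δ + 1)) * (m / 2 * Δ) :=
      mul_le_mul_of_nonneg_right h1 (by positivity)
    have h3 : (ε / (m / 2 * Δ + 1)) * (m / 2 * Δ) < ε := by
      rw [div_mul_eq_mul_div, mul_div_assoc]
      have h4 : (m / 2 * Δ) / (m / 2 * Δ + 1) < 1 := by
        rw [div_lt_one hD1]; linarith
      calc ε * ((m / 2 * Δ) / (m / 2 * Δ + 1)) < ε * 1 := by
            apply mul_lt_mul_of_pos_left h4 hε0
        _ = ε := mul_one ε
    linarith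
  simp only [smul_eq_mul] at key
  have key' : g xs ≤ t * g z + (1 - t) * g xs - t * (1 - t) * (m / 2 * ‖z - xs‖ ^ 2) :=
    le_trans hge key
  have h2 : t * (g xs - g z + (1 - t) * (m / 2 * Δ)) ≤ t * 0 := by
    rw [hΔ]; nlinarith [key']
  have h3 : g xs - g z + (1 - t) * (m / 2 * Δ) ≤ 0 := le_of_mul_le_mul_left h2 ht0
  nlinarith [h3, htΔ]



lemma aux_l1_convex (w : Fin n → ℝ) (hw : ∀ i, 0 ≤ w i) :
    ConvexOn ℝ Set.univ (fun z : EuclideanSpace ℝ (Fin n) => ∑ i, w i * |z i|) := by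
  refine ⟨convex_univ, fun a _ b _ s t hs ht hst => ?_⟩
  simp only [smul_eq_mul]
  rw [Finset.mul_sum, Finset.mul_sum, ← Finset.sum_add_distrib]
  refine Finset.sum_le_sum fun i _ => ?_
  have hcoord : (s • a + t • b) i = s * a i + t * b i := by
    simp [PiLp.add_apply, PiLp.smul_apply, smul_eq_mul]
  rw [hcoord]
  calc w i * |s * a i + t * b i| ≤ w i * (s * |a i| + t * |b i|) := by
        apply mul_le_mul_of_nonneg_left _ (hw i)
        calc |s * a i + t * b i| ≤ |s * a i| + |t * b i| := abs_add_le _ _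
          _ = s * |a i| + t * |b i| := by
              rw [abs_mul, abs_mul, abs_of_nonneg hs, abs_of_nonneg ht]
    _ = s * (w i * |a i|) + t * (w i * |b i|) := by ring

lemma aux_rpow_step {p a b ε : ℝ} (hp0 : 0 < p) (hp1 : p < 1) (ha : 0 ≤ a) (hb : 0 ≤ b)
    (hε : 0 < ε) :
    (b + ε) ^ p ≤ (a + ε) ^ p + p * (a + ε) ^ (p - 1) * (b - a) := by
  set c := a + ε with hc
  have hc0 : 0 < c := by positivity
  set s := (b - a) / c with hs
  have hs1 : -1 ≤ s := by
    rw [hs, le_div_iff₀ hc0]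
    linarith
  have hbern := rpow_one_add_le_one_add_mul_self hs1 hp0.le hp1.le
  have h1s : 0 ≤ 1 + s := by linarith
  have key : b + ε = c * (1 + s) := by
    rw [mul_add, mul_one, hs, mul_div_cancel₀ _ hc0.ne', hc]; ring
  have hcs : c * s = b - a := by rw [hs, mul_div_cancel₀ _ hc0.ne']
  calc (b + ε) ^ p = (c * (1 + s)) ^ p := by rw [key]
    _ = c ^ p * (1 + s) ^ p := Real.mul_rpow hc0.le h1s
    _ ≤ c ^ p * (1 + p * s) := by
        apply mul_le_mul_of_nonneg_left hbern (Real.rpow_nonneg hc0.le p)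
    _ = c ^ p + p * c ^ (p - 1) * (b - a) := by
        have h2 : c ^ p = c ^ (p - 1) * c := by
          rw [← Real.rpow_add_one hc0.ne' (p - 1)]
          norm_num
        rw [mul_add, mul_one, h2, ← hcs]
        ring

lemma aux_abs_le_norm (v : EuclideanSpace ℝ (Fin n)) (i : Fin n) : |v i| ≤ ‖v‖ := by
  rw [EuclideanSpace.norm_eq, ← Real.sqrt_sq_eq_abs]
  apply Real.sqrt_le_sqrt
  have h := Finset.single_le_sum (f := fun j => ‖v j‖ ^ 2)
    (fun j _ => by positivity) (Finset.mem_univ i)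
  simpa [Real.norm_eq_abs, sq_abs] using h

lemma aux_abs_hasDerivAt {a : ℝ} (ha : a ≠ 0) :
    HasDerivAt (fun t : ℝ => |a + t|) (Real.sign a) 0 := by
  rcases ha.lt_or_gt with hneg | hpos
  · rw [Real.sign_of_neg hneg]
    have hbase : HasDerivAt (fun t : ℝ => -(a + t)) (-1) 0 := by
      exact ((hasDerivAt_id (0:ℝ)).const_add a).neg
    apply hbase.congr_of_eventuallyEq
    filter_upwards [Metric.ball_mem_nhds (0:ℝ) (by linarith : 0 < -a)] with t htb
    rw [Metric.mem_ball, Real.dist_eq, sub_zero] at htb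
    have : a + t < 0 := by
      have := abs_lt.mp htb
      linarith [this.2]
    rw [abs_of_neg this]
  · rw [Real.sign_of_pos hpos]
    have hbase : HasDerivAt (fun t : ℝ => a + t) 1 0 := by
      simpa using (hasDerivAt_id (0:ℝ)).const_add a
    apply hbase.congr_of_eventuallyEq
    filter_upwards [Metric.ball_mem_nhds (0:ℝ) hpos] with t htb
    rw [Metric.mem_ball, Real.dist_eq, sub_zero] at htb
    have : 0 < a + t := by
      have := abs_lt.mp htb
      linarith [this.1]
    rw [abs_of_pos this]







-- standalone version of the optimality lemma
lemma aux_opt {Q : EuclideanSpace ℝ (Fin n) → ℝ} (hQ : Differentiable ℝ Q)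
    {lam : ℝ} (hlam : 0 < lam) {w : Fin n → ℝ} (hw : ∀ j, 0 ≤ w j)
    {y : EuclideanSpace ℝ (Fin n)}
    (hmin : ∀ z : EuclideanSpace ℝ (Fin n),
      Q y + lam * ∑ j, w j * |y j| ≤ Q z + lam * ∑ j, w j * |z j|)
    {i : Fin n} (hne : y i ≠ 0) :
    lam * w i ≤ ‖gradient Q y‖ := by
  set e : EuclideanSpace ℝ (Fin n) := EuclideanSpace.single i (1:ℝ) with he
  have hcoord : ∀ (t : ℝ) (j : Fin n), (y + t • e) j = if j = i then y j + t else y j := by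
    intro t j
    by_cases h : j = i <;>
      simp [he, EuclideanSpace.single_apply, h, PiLp.add_apply, PiLp.smul_apply, smul_eq_mul]
  set cR := ∑ j ∈ Finset.univ.erase i, w j * |y j| with hcR
  have hsum : ∀ t : ℝ, (∑ j, w j * |(y + t • e) j|) = w i * |y i + t| + cR := by
    intro t
    rw [← Finset.add_sum_erase Finset.univ _ (Finset.mem_univ i)]
    congr 1
    · rw [hcoord t i]; simp
    · apply Finset.sum_congr rfl
      intro j hj
      rw [hcoord t j, if_neg (Finset.ne_of_mem_erase hj)]
  set ψ : ℝ → ℝ := fun t => Q (y + t • e) + lam * (w i * |y i + t| + cR) with hψ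
  have hy0 : y + (0:ℝ) • e = y := by simp
  have hmin' : ∀ t : ℝ, ψ 0 ≤ ψ t := by
    intro t
    have h1 := hmin (y + t • e)
    rw [hsum t] at h1
    have h0 : (∑ j, w j * |y j|) = w i * |y i| + cR := by
      have := hsum 0
      rw [hy0] at this
      simpa using this
    rw [h0] at h1
    simpa [hψ, hy0] using h1
  have hloc : IsLocalMin ψ 0 := Filter.Eventually.of_forall hmin'
  have hQd : HasDerivAt (fun t : ℝ => Q (y + t • e)) ⟪gradient Q y, e⟫ 0 := by
    have := aux_line_hasDerivAt hQ y e 0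
    rwa [hy0] at this
  have habs := aux_abs_hasDerivAt hne
  have hψd : HasDerivAt ψ (⟪gradient Q y, e⟫ + lam * (w i * Real.sign (y i))) 0 :=
    hQd.add (((habs.const_mul (w i)).add_const cR).const_mul lam)
  have hzero := hloc.hasDerivAt_eq_zero hψd
  have hsign : |Real.sign (y i)| = 1 := by
    rcases Real.sign_apply_eq_of_ne_zero _ hne with h | h <;> rw [h] <;> norm_num
  calc lam * w i = |lam * (w i * Real.sign (y i))| := by
        rw [abs_mul, abs_mul, hsign, abs_of_nonneg hlam.le, abs_of_nonneg (hw i)]; ring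
    _ = |⟪gradient Q y, e⟫| := by
        have : ⟪gradient Q y, e⟫ = -(lam * (w i * Real.sign (y i))) := by linarith [hzero]
        rw [this, abs_neg]
    _ ≤ ‖gradient Q y‖ * ‖e‖ := abs_real_inner_le_norm _ _
    _ = ‖gradient Q y‖ := by rw [he, EuclideanSpace.norm_single]; simp
end AuxGeneral

section AuxIRL1

open Filter Topology Set

local notation "⟪" x ", " y "⟫" => @inner ℝ _ _ x y

variable {n : ℕ}

namespace IRL1

lemma wfun_pos (S : IRL1 n) (k : ℕ) (i : Fin n) :
    0 < wfun S.p (S.x k i) (S.eps k i) := by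
  have hb : 0 < |S.x k i| + S.eps k i := by
    have := S.heps_pos k i
    have := abs_nonneg (S.x k i)
    linarith
  exact mul_pos S.hp0 (Real.rpow_pos_of_pos hb _)

lemma feps_step (S : IRL1 n) (k : ℕ) :
    S.Feps (S.x (k+1)) (S.eps (k+1)) + (S.M - S.Lf / 2) * ‖S.x (k+1) - S.x k‖ ^ 2
      ≤ S.Feps (S.x k) (S.eps k) := by
  have hM0 : 0 ≤ S.M := by linarith [S.hM, S.hLf]
  set xk := S.x k with hxk
  set xk1 := S.x (k+1) with hxk1
  set w : Fin n → ℝ := fun j => wfun S.p (xk j) (S.eps k j) with hw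
  have hwpos : ∀ j, 0 < w j := fun j => S.wfun_pos k j
  have hdesc := aux_descent S.hf_diff S.hf_lip xk xk1
  have hsg := aux_sconv_grad (S.hQ_diff k) (S.hQ_sconv k) xk xk1
  rw [S.hQ_grad k] at hsg
  have hGconv : ConvexOn ℝ Set.univ
      (fun z : EuclideanSpace ℝ (Fin n) =>
        (S.Q k z + S.lam * ∑ j, w j * |z j|) - S.M / 2 * ‖z‖ ^ 2) := by
    have h1 := (S.hQ_sconv k).add
      (aux_l1_convex (fun j => S.lam * w j) (fun j => mul_nonneg S.hlam.le (hwpos j).le))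
    have heq : (fun z : EuclideanSpace ℝ (Fin n) =>
        (S.Q k z + S.lam * ∑ j, w j * |z j|) - S.M / 2 * ‖z‖ ^ 2)
        = (fun z => (S.Q k z - S.M / 2 * ‖z‖ ^ 2) + ∑ j, (S.lam * w j) * |z j|) := by
      funext z
      rw [Finset.mul_sum]
      simp only [mul_assoc]
      ring
    rw [heq]
    exact h1
  have hsm := aux_strong_min hM0 hGconv (S.hmin k) xk
  rw [norm_sub_rev] at hsm
  have hstep : ∀ j, (|xk1 j| + S.eps k j) ^ S.p
      ≤ (|xk j| + S.eps k j) ^ S.p + w j * (|xk1 j| - |xk j|) := by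
    intro j
    have h := aux_rpow_step S.hp0 S.hp1 (abs_nonneg (xk j)) (abs_nonneg (xk1 j))
      (S.heps_pos k j)
    simpa [hw, wfun, mul_assoc] using h
  set A1 := ∑ j, (|xk1 j| + S.eps (k+1) j) ^ S.p with hA1
  set A2 := ∑ j, (|xk1 j| + S.eps k j) ^ S.p with hA2
  set A3 := ∑ j, (|xk j| + S.eps k j) ^ S.p with hA3
  set B1 := ∑ j, w j * |xk1 j| with hB1
  set B0 := ∑ j, w j * |xk j| with hB0
  have hsum4 : A2 ≤ A3 + (B1 - B0) := by
    calc A2 ≤ ∑ j, ((|xk j| + S.eps k j) ^ S.p + w j * (|xk1 j| - |xk j|)) :=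
          Finset.sum_le_sum fun j _ => hstep j
      _ = A3 + (B1 - B0) := by
          rw [Finset.sum_add_distrib]
          congr 1
          rw [← Finset.sum_sub_distrib]
          apply Finset.sum_congr rfl
          intro j _
          ring
  have hsum1 : A1 ≤ A2 := by
    apply Finset.sum_le_sum
    intro j _
    have h1 := S.heps_dec k j
    have h2 := S.heps_pos k j
    have h4 := S.heps_pos (k+1) j
    apply Real.rpow_le_rpow (by have := abs_nonneg (xk1 j); linarith) _ S.hp0.le
    have h3 : S.mu * S.eps k j ≤ S.eps k j := by nlinarith [S.hmu1]
    linarith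
  have ha : S.lam * A1 ≤ S.lam * A2 := mul_le_mul_of_nonneg_left hsum1 S.hlam.le
  have hb : S.lam * A2 ≤ S.lam * A3 + S.lam * B1 - S.lam * B0 := by
    have := mul_le_mul_of_nonneg_left hsum4 S.hlam.le
    nlinarith [this]
  simp only [IRL1.Feps, ← hxk, ← hxk1, ← hA1, ← hA3]
  linarith [ha, hb, hdesc, hsg, hsm]

lemma feps_antitone (S : IRL1 n) :
    Antitone (fun k => S.Feps (S.x k) (S.eps k)) := by
  apply antitone_nat_of_succ_le
  intro k
  have h := S.feps_step k
  have h2 : 0 ≤ (S.M - S.Lf / 2) * ‖S.x (k+1) - S.x k‖ ^ 2 := by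
    apply mul_nonneg (by linarith [S.hM]) (by positivity)
  linarith

lemma fobj_le_feps (S : IRL1 n) (k : ℕ) :
    S.Fobj (S.x k) ≤ S.Feps (S.x k) (S.eps k) := by
  simp only [IRL1.Fobj, IRL1.Feps]
  have h : ∀ j, |S.x k j| ^ S.p ≤ (|S.x k j| + S.eps k j) ^ S.p := by
    intro j
    apply Real.rpow_le_rpow (abs_nonneg _) _ S.hp0.le
    linarith [(S.heps_pos k j)]
  have hsum := Finset.sum_le_sum (s := Finset.univ)
    (f := fun j => |S.x k j| ^ S.p) (g := fun j => (|S.x k j| + S.eps k j) ^ S.p)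
    (fun j _ => h j)
  nlinarith [mul_le_mul_of_nonneg_left hsum S.hlam.le]

lemma mem_level (S : IRL1 n) (k : ℕ) :
    S.Fobj (S.x k) ≤ S.Feps (S.x 0) (S.eps 0) :=
  le_trans (S.fobj_le_feps k) (S.feps_antitone (Nat.zero_le k))

end IRL1

end AuxIRL1


namespace IRL1

open Filter Topology Set

variable {n : ℕ}

lemma diff_tendsto (S : IRL1 n) (hbdd : S.LevelBounded) :
    Filter.Tendsto (fun k => ‖S.x (k+1) - S.x k‖) Filter.atTop (𝓝 0) := by
  set a : ℕ → ℝ := fun k => S.Feps (S.x k) (S.eps k) with ha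
  have hKcpt : IsCompact (closure {z : EuclideanSpace ℝ (Fin n) |
      S.Fobj z ≤ S.Feps (S.x 0) (S.eps 0)}) :=
    Metric.isCompact_of_isClosed_isBounded isClosed_closure hbdd.closure
  obtain ⟨zmin, hzmem, hzmin⟩ := hKcpt.exists_isMinOn
    ⟨S.x 0, subset_closure (S.mem_level 0)⟩ (S.hf_diff.continuous.continuousOn)
  have hlow : ∀ k, S.f zmin ≤ a k := by
    intro k
    have h1 : S.f zmin ≤ S.f (S.x k) :=
      isMinOn_iff.mp hzmin _ (subset_closure (S.mem_level k))
    have h2 : S.f (S.x k) ≤ a k := by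
      simp only [ha, IRL1.Feps]
      have h3 : 0 ≤ ∑ j, (|S.x k j| + S.eps k j) ^ S.p :=
        Finset.sum_nonneg fun j _ => Real.rpow_nonneg
          (by have := S.heps_pos k j; have := abs_nonneg (S.x k j); linarith) _
      nlinarith [S.hlam]
    linarith
  have hanti : Antitone a := S.feps_antitone
  have hbdd2 : BddBelow (Set.range a) := ⟨S.f zmin, by rintro _ ⟨k, rfl⟩; exact hlow k⟩
  have hconv := tendsto_atTop_ciInf hanti hbdd2
  have hconv2 : Filter.Tendsto (fun k => a (k+1)) Filter.atTop (𝓝 (⨅ i, a i)) :=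
    hconv.comp (tendsto_add_atTop_nat 1)
  have hgap : Filter.Tendsto (fun k => a k - a (k+1)) Filter.atTop (𝓝 0) := by
    have := hconv.sub hconv2
    simpa using this
  have hc0 : 0 < S.M - S.Lf / 2 := by linarith [S.hM]
  have hsq : Filter.Tendsto (fun k => ‖S.x (k+1) - S.x k‖ ^ 2) Filter.atTop (𝓝 0) := by
    have hb : ∀ k, ‖S.x (k+1) - S.x k‖ ^ 2 ≤ (a k - a (k+1)) / (S.M - S.Lf / 2) := by
      intro k
      rw [le_div_iff₀ hc0]
      have h9 : a (k+1) + (S.M - S.Lf/2) * ‖S.x (k+1) - S.x k‖^2 ≤ a k := S.feps_step k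
      nlinarith [h9]
    have hg : Filter.Tendsto (fun k => (a k - a (k+1)) / (S.M - S.Lf / 2))
        Filter.atTop (𝓝 0) := by
      have := hgap.div_const (S.M - S.Lf / 2)
      simpa using this
    exact squeeze_zero (fun k => by positivity) hb hg
  have hsqrt := hsq.sqrt
  have heq : (fun k => Real.sqrt (‖S.x (k+1) - S.x k‖ ^ 2))
      = fun k => ‖S.x (k+1) - S.x k‖ :=
    funext fun k => Real.sqrt_sq (norm_nonneg _)
  rw [heq] at hsqrt
  simpa using hsqrt

lemma weight_bound (S : IRL1 n) (hbdd : S.LevelBounded) :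
    ∃ C : ℝ, 0 < C ∧ ∀ k i, S.x (k+1) i ≠ 0 →
      S.lam * wfun S.p (S.x k i) (S.eps k i) ≤ C := by
  obtain ⟨R, hR⟩ := hbdd.subset_closedBall 0
  have hxR : ∀ k, ‖S.x k‖ ≤ R := fun k => by
    have := hR (S.mem_level k)
    rwa [Metric.mem_closedBall, dist_zero_right] at this
  have hR0 : 0 ≤ R := le_trans (norm_nonneg _) (hxR 0)
  refine ⟨‖gradient S.f 0‖ + |S.Lf| * R + |S.L| * (2 * R) + 1, by positivity,
    fun k i hne => ?_⟩
  have hopt := aux_opt (S.hQ_diff k) S.hlam (fun j => (S.wfun_pos k j).le) (S.hmin k) hne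
  refine le_trans hopt ?_
  have h1 : ‖gradient (S.Q k) (S.x (k+1))‖
      ≤ ‖gradient (S.Q k) (S.x (k+1)) - gradient (S.Q k) (S.x k)‖
        + ‖gradient (S.Q k) (S.x k)‖ := by
    calc ‖gradient (S.Q k) (S.x (k+1))‖
        = ‖(gradient (S.Q k) (S.x (k+1)) - gradient (S.Q k) (S.x k))
            + gradient (S.Q k) (S.x k)‖ := by rw [sub_add_cancel]
      _ ≤ _ := norm_add_le _ _
  have h2 := S.hQ_lip k (S.x (k+1)) (S.x k)
  have h2' : ‖gradient (S.Q k) (S.x (k+1)) - gradient (S.Q k) (S.x k)‖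
      ≤ |S.L| * (2 * R) := by
    have h5 : ‖S.x (k+1) - S.x k‖ ≤ 2 * R :=
      le_trans (norm_sub_le _ _) (by linarith [hxR (k+1), hxR k])
    calc ‖gradient (S.Q k) (S.x (k+1)) - gradient (S.Q k) (S.x k)‖
        ≤ S.L * ‖S.x (k+1) - S.x k‖ := h2
      _ ≤ |S.L| * ‖S.x (k+1) - S.x k‖ :=
          mul_le_mul_of_nonneg_right (le_abs_self _) (norm_nonneg _)
      _ ≤ |S.L| * (2 * R) := mul_le_mul_of_nonneg_left h5 (abs_nonneg _)
  have h3 : ‖gradient (S.Q k) (S.x k)‖ ≤ |S.Lf| * R + ‖gradient S.f 0‖ := by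
    rw [S.hQ_grad k]
    have h6 : ‖gradient S.f (S.x k)‖
        ≤ ‖gradient S.f (S.x k) - gradient S.f 0‖ + ‖gradient S.f 0‖ := by
      calc ‖gradient S.f (S.x k)‖
          = ‖(gradient S.f (S.x k) - gradient S.f 0) + gradient S.f 0‖ := by
            rw [sub_add_cancel]
        _ ≤ _ := norm_add_le _ _
    have h7 := S.hf_lip (S.x k) 0
    rw [sub_zero] at h7
    have h8 : S.Lf * ‖S.x k‖ ≤ |S.Lf| * R := by
      calc S.Lf * ‖S.x k‖ ≤ |S.Lf| * ‖S.x k‖ :=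
            mul_le_mul_of_nonneg_right (le_abs_self _) (norm_nonneg _)
        _ ≤ |S.Lf| * R := mul_le_mul_of_nonneg_left (hxR k) (abs_nonneg _)
    linarith
  linarith

end IRL1

/-- In the IRL1 setting with bounded level set, there exist `k̄` and
`s ∈ {-1, 0, +1}^n` such that `sign(x_i^k) = s_i` for all `i` and all `k > k̄`. -/
theorem stmt11 {n : ℕ} (S : IRL1 n) (hbdd : S.LevelBounded) :
    ∃ (kbar : ℕ) (s : Fin n → ℝ),
      (∀ i, s i = -1 ∨ s i = 0 ∨ s i = 1) ∧
      ∀ k > kbar, ∀ i, Real.sign (S.x k i) = s i := by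
  classical
  obtain ⟨C, hC0, hCb⟩ := S.weight_bound hbdd
  have hlp : 0 < S.lam * S.p := mul_pos S.hlam S.hp0
  have hA0 : 0 < C / (S.lam * S.p) := div_pos hC0 hlp
  set δ := (C / (S.lam * S.p)) ^ (S.p - 1)⁻¹ with hδdef
  have hδ0 : 0 < δ := Real.rpow_pos_of_pos hA0 _
  have hp1' : S.p - 1 < 0 := by linarith [S.hp1]
  have claim1 : ∀ k i, S.x (k+1) i ≠ 0 → δ ≤ |S.x k i| + S.eps k i := by
    intro k i hne
    set b := |S.x k i| + S.eps k i with hb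
    have hb0 : 0 < b := by
      have := S.heps_pos k i
      have := abs_nonneg (S.x k i)
      rw [hb]; linarith
    have h1 := hCb k i hne
    have h2 : b ^ (S.p - 1) ≤ C / (S.lam * S.p) := by
      rw [le_div_iff₀ hlp]
      calc b ^ (S.p - 1) * (S.lam * S.p) = S.lam * (S.p * b ^ (S.p - 1)) := by ring
        _ ≤ C := by simpa [wfun, hb] using h1
    have h3 := Real.rpow_le_rpow_of_nonpos (Real.rpow_pos_of_pos hb0 _) h2
      (inv_nonpos.mpr hp1'.le)
    have h4 : (b ^ (S.p - 1)) ^ (S.p - 1)⁻¹ = b := by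
      rw [← Real.rpow_mul hb0.le, mul_inv_cancel₀ (by linarith : S.p - 1 ≠ 0),
        Real.rpow_one]
    rw [h4] at h3
    exact h3
  set B := ∑ j, S.eps 0 j with hB
  have hepsB : ∀ k i, S.eps k i ≤ S.mu ^ k * B := by
    intro k i
    have h1 : ∀ m : ℕ, S.eps m i ≤ S.mu ^ m * S.eps 0 i := by
      intro m
      induction m with
      | zero => simp
      | succ m ih =>
        calc S.eps (m+1) i ≤ S.mu * S.eps m i := S.heps_dec m i
          _ ≤ S.mu * (S.mu ^ m * S.eps 0 i) := mul_le_mul_of_nonneg_left ih S.hmu0.le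
          _ = S.mu ^ (m+1) * S.eps 0 i := by ring
    have h2 : S.eps 0 i ≤ B :=
      Finset.single_le_sum (fun j _ => (S.heps_pos 0 j).le) (Finset.mem_univ i)
    calc S.eps k i ≤ S.mu ^ k * S.eps 0 i := h1 k
      _ ≤ S.mu ^ k * B := mul_le_mul_of_nonneg_left h2 (pow_nonneg S.hmu0.le k)
  have htendB : Filter.Tendsto (fun k => S.mu ^ k * B) Filter.atTop (𝓝 0) := by
    have := (tendsto_pow_atTop_nhds_zero_of_lt_one S.hmu0.le S.hmu1).mul_const B
    simpa using this
  have hev1 : ∀ᶠ k in Filter.atTop, S.mu ^ k * B < δ / 2 :=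
    htendB.eventually_lt_const (by linarith)
  have hev2 : ∀ᶠ k in Filter.atTop, ‖S.x (k+1) - S.x k‖ < δ / 4 :=
    (S.diff_tendsto hbdd).eventually_lt_const (by linarith)
  obtain ⟨K, hK⟩ := Filter.eventually_atTop.mp (hev1.and hev2)
  have key : ∀ k, K ≤ k → ∀ i, S.x (k+1) i ≠ 0 →
      S.x k i ≠ 0 ∧ Real.sign (S.x (k+1) i) = Real.sign (S.x k i) := by
    intro k hk i hne
    have h1 := claim1 k i hne
    have h2 : S.eps k i < δ / 2 := lt_of_le_of_lt (hepsB k i) ((hK k hk).1)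
    have h3 : δ / 2 < |S.x k i| := by linarith
    have h4 : |S.x (k+1) i - S.x k i| < δ / 4 := by
      have h5 := aux_abs_le_norm (S.x (k+1) - S.x k) i
      rw [PiLp.sub_apply] at h5
      exact lt_of_le_of_lt h5 ((hK k hk).2)
    have habs := abs_lt.mp h4
    constructor
    · intro h0
      rw [h0, abs_zero] at h3
      linarith
    · rcases lt_trichotomy (S.x k i) 0 with hlt | heq | hgt
      · have h6 : |S.x k i| = -(S.x k i) := abs_of_neg hlt
        have h7 : S.x (k+1) i < 0 := by
          rw [h6] at h3
          linarith [habs.2]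
        rw [Real.sign_of_neg h7, Real.sign_of_neg hlt]
      · rw [heq, abs_zero] at h3
        linarith
      · have h6 : |S.x k i| = S.x k i := abs_of_pos hgt
        have h7 : 0 < S.x (k+1) i := by
          rw [h6] at h3
          linarith [habs.1]
        rw [Real.sign_of_pos h7, Real.sign_of_pos hgt]
  have hper : ∀ i : Fin n, ∃ (Ki : ℕ) (si : ℝ), (si = -1 ∨ si = 0 ∨ si = 1) ∧
      ∀ k, Ki < k → Real.sign (S.x k i) = si := by
    intro i
    by_cases hcase : ∃ k0, K + 1 ≤ k0 ∧ S.x k0 i = 0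
    · obtain ⟨k0, hk0K, hk0⟩ := hcase
      refine ⟨k0, 0, Or.inr (Or.inl rfl), ?_⟩
      have hzero : ∀ k, k0 ≤ k → S.x k i = 0 := by
        intro k hk
        induction k, hk using Nat.le_induction with
        | base => exact hk0
        | succ m hm ih =>
          by_contra hne
          exact (key m (by omega) i hne).1 ih
      intro k hk
      rw [hzero k hk.le, Real.sign_zero]
    · push_neg at hcase
      refine ⟨K, Real.sign (S.x (K+1) i), Real.sign_apply_eq _, ?_⟩
      have hconst : ∀ k, K + 1 ≤ k → Real.sign (S.x k i) = Real.sign (S.x (K+1) i) := by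
        intro k hk
        induction k, hk using Nat.le_induction with
        | base => rfl
        | succ m hm ih =>
          have hne : S.x (m+1) i ≠ 0 := hcase (m+1) (by omega)
          rw [(key m (by omega) i hne).2, ih]
      intro k hk
      exact hconst k hk
  choose Ki si hsi hsign using hper
  refine ⟨Finset.univ.sup Ki, si, hsi, ?_⟩
  intro k hk i
  exact hsign i k (lt_of_le_of_lt (Finset.le_sup (Finset.mem_univ i)) hk)
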